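/- Let σ > 0, let X be a real random variable with law N(0,σ²) and let Y be an ℝ^d-valued random variable on the same probability space such that X and Y are independent. Then for every continuously differentiable function f : ℝ × ℝ^d → ℝ such that f and ∂_x f are bounded, one has σ² · E[∂_x f(X,Y)] = E[X · f(X,Y)]. -/

import Mathlib

open MeasureTheory ProbabilityTheory Real Filter Set
open scoped NNReal ENNReal

lemma pdf_eq (v : ℝ≥0) :
    ProbabilityTheory.gaussianPDFReal 0 v
      = fun x => (Real.sqrt (2 * π * v))⁻¹ * Real.exp (-(2*(v:ℝ))⁻¹ * x ^ 2) := by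
  funext x
  simp only [ProbabilityTheory.gaussianPDFReal, sub_zero]
  congr 1
  rw [neg_div, div_eq_mul_inv]
  ring

lemma pdf_hasDeriv (v : ℝ≥0) (hv : (0:ℝ) < v) (x : ℝ) :
    HasDerivAt (ProbabilityTheory.gaussianPDFReal 0 v)
      (-(x / v) * ProbabilityTheory.gaussianPDFReal 0 v x) x := by
  rw [pdf_eq]
  have h1 : HasDerivAt (fun x : ℝ => -(2*(v:ℝ))⁻¹ * x ^ 2) (-(2*(v:ℝ))⁻¹ * (2*x)) x := by
    simpa using ((hasDerivAt_pow 2 x).const_mul (-(2*(v:ℝ))⁻¹))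
  have h2 := (h1.exp).const_mul (Real.sqrt (2 * π * v))⁻¹
  refine h2.congr_deriv ?_
  field_simp

lemma pdf_tendsto_atTop (v : ℝ≥0) (hv : (0:ℝ) < v) :
    Tendsto (ProbabilityTheory.gaussianPDFReal 0 v) atTop (nhds 0) := by
  rw [pdf_eq]
  rw [show (0:ℝ) = (Real.sqrt (2 * π * v))⁻¹ * 0 by ring]
  apply Tendsto.const_mul
  apply Real.tendsto_exp_atBot.comp
  have : Tendsto (fun x : ℝ => x ^ 2) atTop atTop := tendsto_pow_atTop (by norm_num)
  have h := this.const_mul_atTop (show (0:ℝ) < (2*(v:ℝ))⁻¹ by positivity)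
  refine (tendsto_neg_atTop_atBot.comp h).congr (fun x => by simp only [Function.comp_apply]; ring)

lemma pdf_tendsto_atBot (v : ℝ≥0) (hv : (0:ℝ) < v) :
    Tendsto (ProbabilityTheory.gaussianPDFReal 0 v) atBot (nhds 0) := by
  have := (pdf_tendsto_atTop v hv).comp tendsto_neg_atBot_atTop
  refine this.congr (fun x => ?_)
  simp [pdf_eq]

lemma pdf_cont (v : ℝ≥0) : Continuous (ProbabilityTheory.gaussianPDFReal 0 v) := by
  rw [pdf_eq]; continuity

lemma integrable_mul_pdf (v : ℝ≥0) (hv : (0:ℝ) < v) :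
    Integrable (fun x => x * ProbabilityTheory.gaussianPDFReal 0 v x) := by
  rw [pdf_eq]
  have h := (integrable_mul_exp_neg_mul_sq (show (0:ℝ) < (2*(v:ℝ))⁻¹ by positivity)).const_mul
    (Real.sqrt (2 * π * v))⁻¹
  refine h.congr' ?_ (Eventually.of_forall fun x => by ring)
  exact (continuous_id.mul (by continuity)).aestronglyMeasurable


lemma stein1d (v : ℝ≥0) (hv : (0:ℝ) < v) (g g' : ℝ → ℝ)
    (hg : ∀ x, HasDerivAt g (g' x) x) (hg'c : Continuous g')
    (C : ℝ) (hC : ∀ x, |g x| ≤ C) (C' : ℝ) (hC' : ∀ x, |g' x| ≤ C') :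
    (v:ℝ) * ∫ x, g' x ∂(gaussianReal 0 v) = ∫ x, x * g x ∂(gaussianReal 0 v) := by
  have hvne : v ≠ 0 := by
    intro h; rw [h] at hv; simp at hv
  set φ := ProbabilityTheory.gaussianPDFReal 0 v with hφdef
  have hφc : Continuous φ := pdf_cont v
  have hφnn : ∀ x, 0 ≤ φ x := fun x => ProbabilityTheory.gaussianPDFReal_nonneg 0 v x
  have hgc : Continuous g := continuous_iff_continuousAt.2 fun x => (hg x).continuousAt
  have hC0 : 0 ≤ C := le_trans (abs_nonneg _) (hC 0)
  have Iφ : Integrable φ := ProbabilityTheory.integrable_gaussianPDFReal 0 v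
  have Ixφ : Integrable (fun x => x * φ x) := integrable_mul_pdf v hv
  set h : ℝ → ℝ := fun x => (v:ℝ) * (g x * φ x) with hhdef
  have hder : ∀ x, HasDerivAt h (((v:ℝ) * g' x * φ x) - x * g x * φ x) x := by
    intro x
    have hd := ((hg x).mul (pdf_hasDeriv v hv x)).const_mul (v:ℝ)
    refine hd.congr_deriv ?_
    have hx : (v:ℝ) * (x / v) = x := mul_div_cancel₀ x hv.ne'
    linear_combination (-(g x) * ProbabilityTheory.gaussianPDFReal 0 v x) * hx
  have h1 : ∀ x, ‖(v:ℝ) * g' x * φ x‖ ≤ (v:ℝ) * C' * φ x := by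
    intro x
    rw [Real.norm_eq_abs, abs_mul, abs_mul, abs_of_nonneg hv.le, abs_of_nonneg (hφnn x)]
    have := hC' x
    gcongr
    exact hφnn x
  have h2 : ∀ x, ‖x * g x * φ x‖ ≤ C * ‖x * φ x‖ := by
    intro x
    rw [Real.norm_eq_abs, Real.norm_eq_abs, abs_mul, abs_mul, abs_mul,
      abs_of_nonneg (hφnn x)]
    calc |x| * |g x| * φ x ≤ |x| * C * φ x := by
          have := hC x
          gcongr
          exact hφnn x
    _ = C * (|x| * φ x) := by ring
  have Ia : Integrable (fun x => (v:ℝ) * g' x * φ x) := by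
    refine Integrable.mono' (Iφ.const_mul ((v:ℝ) * C')) ?_
      (Eventually.of_forall fun x => h1 x)
    exact (((continuous_const.mul hg'c).mul hφc)).aestronglyMeasurable
  have Ib : Integrable (fun x => x * g x * φ x) := by
    refine Integrable.mono' ((Ixφ.norm).const_mul C) ?_
      (Eventually.of_forall fun x => h2 x)
    exact (((continuous_id.mul hgc).mul hφc)).aestronglyMeasurable
  have IF : Integrable (fun x => ((v:ℝ) * g' x * φ x) - x * g x * φ x) := Ia.sub Ib
  have hnormh : ∀ x, ‖h x‖ ≤ (v:ℝ) * C * φ x := by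
    intro x
    rw [hhdef]
    simp only [Real.norm_eq_abs, abs_mul, abs_of_nonneg hv.le, abs_of_nonneg (hφnn x)]
    have := hC x
    calc (v:ℝ) * (|g x| * φ x) ≤ (v:ℝ) * (C * φ x) := by
          gcongr
          exact hφnn x
    _ = (v:ℝ) * C * φ x := by ring
  have htop : Tendsto h atTop (nhds 0) := by
    refine squeeze_zero_norm hnormh ?_
    have := (pdf_tendsto_atTop v hv).const_mul ((v:ℝ) * C)
    simpa using this
  have hbot : Tendsto h atBot (nhds 0) := by
    refine squeeze_zero_norm hnormh ?_
    have := (pdf_tendsto_atBot v hv).const_mul ((v:ℝ) * C)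
    simpa using this
  have e1 : ∫ x in Iic (0:ℝ), (((v:ℝ) * g' x * φ x) - x * g x * φ x) = h 0 - 0 :=
    integral_Iic_of_hasDerivAt_of_tendsto' (fun x _ => hder x) IF.integrableOn hbot
  have e2 : ∫ x in Ioi (0:ℝ), (((v:ℝ) * g' x * φ x) - x * g x * φ x) = 0 - h 0 :=
    integral_Ioi_of_hasDerivAt_of_tendsto' (fun x _ => hder x) IF.integrableOn htop
  have e3 : ∫ x, (((v:ℝ) * g' x * φ x) - x * g x * φ x) = 0 := by
    rw [← intervalIntegral.integral_Iic_add_Ioi IF.integrableOn IF.integrableOn, e1, e2]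
    ring
  rw [integral_sub Ia Ib, sub_eq_zero] at e3
  have conv : ∀ u : ℝ → ℝ, ∫ x, u x ∂(gaussianReal 0 v) = ∫ x, φ x * u x := by
    intro u
    rw [ProbabilityTheory.gaussianReal_of_var_ne_zero _ hvne]
    have hpdf : ProbabilityTheory.gaussianPDF 0 v
        = fun x => (((φ x).toNNReal : ℝ≥0) : ℝ≥0∞) := by
      funext x; rfl
    rw [hpdf, integral_withDensity_eq_integral_smul
      ((ProbabilityTheory.measurable_gaussianPDFReal 0 v).real_toNNReal) u]
    congr 1
    funext x
    rw [NNReal.smul_def, Real.coe_toNNReal _ (hφnn x)]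
    rfl
  rw [conv g', conv (fun x => x * g x)]
  calc (v:ℝ) * ∫ x, φ x * g' x = ∫ x, (v:ℝ) * g' x * φ x := by
        rw [← integral_const_mul]
        congr 1; funext x; ring
  _ = ∫ x, x * g x * φ x := e3
  _ = ∫ x, φ x * (x * g x) := by congr 1; funext x; ring

lemma integrable_gaussian_iff (v : ℝ≥0) (hvne : v ≠ 0) (u : ℝ → ℝ) :
    Integrable u (gaussianReal 0 v)
      ↔ Integrable (fun x => ProbabilityTheory.gaussianPDFReal 0 v x * u x) := by
  rw [ProbabilityTheory.gaussianReal_of_var_ne_zero _ hvne]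
  have hpdf : ProbabilityTheory.gaussianPDF 0 v
      = fun x => (((ProbabilityTheory.gaussianPDFReal 0 v x).toNNReal : ℝ≥0) : ℝ≥0∞) := rfl
  rw [hpdf, integrable_withDensity_iff_integrable_smul
    ((ProbabilityTheory.measurable_gaussianPDFReal 0 v).real_toNNReal)]
  apply integrable_congr
  refine Eventually.of_forall fun x => ?_
  show (ProbabilityTheory.gaussianPDFReal 0 v x).toNNReal • u x = _
  rw [NNReal.smul_def, Real.coe_toNNReal _ (ProbabilityTheory.gaussianPDFReal_nonneg 0 v x)]
  rfl

/-- If `X ~ N(0, σ²)` and `X` is independent of the `ℝ^d`-valued random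
variable `Y`, then for every continuously differentiable `f : ℝ × ℝ^d → ℝ` such that `f` and
`∂_x f` are bounded, one has `σ² ⬝ E[∂_x f(X,Y)] = E[X ⬝ f(X,Y)]`. -/
theorem stmt0 {d : ℕ} (hd : 1 ≤ d) {Ω : Type*} [MeasureSpace Ω]
    [IsProbabilityMeasure (ℙ : Measure Ω)]
    (σ : ℝ) (hσ : 0 < σ)
    (X : Ω → ℝ) (Y : Ω → EuclideanSpace ℝ (Fin d))
    (hX : Measurable X) (hY : Measurable Y)
    (hlaw : Measure.map X ℙ = gaussianReal 0 ⟨σ ^ 2, sq_nonneg σ⟩)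
    (hindep : IndepFun X Y ℙ)
    (f : ℝ × EuclideanSpace ℝ (Fin d) → ℝ)
    (hf : ContDiff ℝ 1 f)
    (hfB : ∃ C : ℝ, ∀ p, |f p| ≤ C)
    (hdB : ∃ C : ℝ, ∀ (x : ℝ) (y : EuclideanSpace ℝ (Fin d)),
      |deriv (fun t => f (t, y)) x| ≤ C) :
    σ ^ 2 * ∫ ω, deriv (fun t => f (t, Y ω)) (X ω) ∂ℙ
      = ∫ ω, X ω * f (X ω, Y ω) ∂ℙ := by
  obtain ⟨C, hCf⟩ := hfB
  obtain ⟨C', hC'⟩ := hdB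
  have hC0 : 0 ≤ C := le_trans (abs_nonneg _) (hCf (0, 0))
  set v : ℝ≥0 := ⟨σ ^ 2, sq_nonneg σ⟩ with hvdef
  have hv : (0:ℝ) < v := by
    show (0:ℝ) < σ ^ 2
    positivity
  have hvne : v ≠ 0 := by
    intro h; rw [h] at hv; simp at hv
  set μ := gaussianReal 0 v with hμdef
  set ν := Measure.map Y ℙ with hνdef
  have hνP : IsProbabilityMeasure ν := Measure.isProbabilityMeasure_map hY.aemeasurable
  set D : ℝ × EuclideanSpace ℝ (Fin d) → ℝ := fun p => fderiv ℝ f p (1, 0) with hD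
  have hDd : ∀ (x : ℝ) (y : EuclideanSpace ℝ (Fin d)),
      HasDerivAt (fun t => f (t, y)) (D (x, y)) x := by
    intro x y
    have hf' := (hf.differentiable one_ne_zero (x, y)).hasFDerivAt
    have hgd : HasDerivAt (fun t : ℝ => (t, y))
        ((1:ℝ), (0 : EuclideanSpace ℝ (Fin d))) x :=
      (hasDerivAt_id x).prodMk (hasDerivAt_const x y)
    exact hf'.comp_hasDerivAt x hgd
  have hDc : Continuous D := (hf.continuous_fderiv one_ne_zero).clm_apply continuous_const
  have hDb : ∀ p : ℝ × EuclideanSpace ℝ (Fin d), |D p| ≤ C' := by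
    intro p
    rw [← (hDd p.1 p.2).deriv]
    exact hC' p.1 p.2
  have hjoint : Measure.map (fun ω => (X ω, Y ω)) ℙ = μ.prod ν := by
    rw [(indepFun_iff_map_prod_eq_prod_map_map hX.aemeasurable hY.aemeasurable).mp hindep,
      hlaw]
  have hfc : Continuous f := hf.continuous
  have hxfc : Continuous (fun p : ℝ × EuclideanSpace ℝ (Fin d) => p.1 * f p) :=
    continuous_fst.mul hfc
  have ID : Integrable D (μ.prod ν) := by
    refine Integrable.mono' (integrable_const C') hDc.aestronglyMeasurable
      (Eventually.of_forall fun p => ?_)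
    simpa [Real.norm_eq_abs] using hDb p
  have Iidμ : Integrable (fun x : ℝ => x) μ := by
    rw [hμdef, integrable_gaussian_iff v hvne]
    exact (integrable_mul_pdf v hv).congr
      (Eventually.of_forall fun x => by ring)
  have hmapfst : Measure.map Prod.fst (μ.prod ν) = μ := by
    rw [Measure.map_fst_prod]; simp
  have h2 : Integrable (fun p : ℝ × EuclideanSpace ℝ (Fin d) => C * |p.1|) (μ.prod ν) := by
    have h1 : Integrable (fun x : ℝ => C * |x|) μ := (Iidμ.abs).const_mul C
    rw [← hmapfst] at h1
    exact (integrable_map_measure (continuous_const.mul continuous_abs).aestronglyMeasurable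
      measurable_fst.aemeasurable).mp h1
  have Ixf : Integrable (fun p : ℝ × EuclideanSpace ℝ (Fin d) => p.1 * f p) (μ.prod ν) := by
    refine Integrable.mono' h2 hxfc.aestronglyMeasurable (Eventually.of_forall fun p => ?_)
    rw [Real.norm_eq_abs, abs_mul]
    calc |p.1| * |f p| ≤ |p.1| * C := by
          have := hCf p
          gcongr
    _ = C * |p.1| := by ring
  calc σ ^ 2 * ∫ ω, deriv (fun t => f (t, Y ω)) (X ω) ∂ℙ
      = (v:ℝ) * ∫ ω, D (X ω, Y ω) ∂ℙ := by
        congr 1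
        exact integral_congr_ae (Eventually.of_forall fun ω => (hDd (X ω) (Y ω)).deriv)
    _ = (v:ℝ) * ∫ p, D p ∂(μ.prod ν) := by
        rw [← hjoint, integral_map (hX.prodMk hY).aemeasurable hDc.aestronglyMeasurable]
    _ = (v:ℝ) * ∫ y, ∫ x, D (x, y) ∂μ ∂ν := by rw [integral_prod_symm D ID]
    _ = ∫ y, (v:ℝ) * ∫ x, D (x, y) ∂μ ∂ν := (integral_const_mul _ _).symm
    _ = ∫ y, ∫ x, x * f (x, y) ∂μ ∂ν := by
        refine integral_congr_ae (Eventually.of_forall fun y => ?_)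
        exact stein1d v hv (fun t => f (t, y)) (fun t => D (t, y))
          (fun x => hDd x y) (hDc.comp (continuous_id.prodMk continuous_const))
          C (fun x => hCf (x, y)) C' (fun x => hDb (x, y))
    _ = ∫ p : ℝ × EuclideanSpace ℝ (Fin d), p.1 * f p ∂(μ.prod ν) :=
        (integral_prod_symm _ Ixf).symm
    _ = ∫ ω, X ω * f (X ω, Y ω) ∂ℙ := by
        rw [← hjoint, integral_map (hX.prodMk hY).aemeasurable hxfc.aestronglyMeasurable]
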